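/- If (u, v) is the pair of positive integers solving u² − 5⁹·v² = −1 with u minimal among all positive integer solutions, then u² + 1 > 2^(2^11), i.e. u² + 1 > 2^2048. -/

import Mathlib

def pstep : ℤ × ℤ → ℤ × ℤ := fun p => (9 * p.1 + 20 * p.2, 4 * p.1 + 9 * p.2)

def pstepZ : ZMod 625 × ZMod 625 → ZMod 625 × ZMod 625 :=
  fun p => (9 * p.1 + 20 * p.2, 4 * p.1 + 9 * p.2)

lemma pstep_cast (k : ℕ) :
    ((((pstep^[k] (2,1)).1 : ℤ) : ZMod 625), (((pstep^[k] (2,1)).2 : ℤ) : ZMod 625))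
      = pstepZ^[k] (2,1) := by
  induction k with
  | zero => simp
  | succ n ih =>
    have h1 : (((pstep^[n] (2,1)).1 : ℤ) : ZMod 625) = (pstepZ^[n] (2,1)).1 :=
      congrArg Prod.fst ih
    have h2 : (((pstep^[n] (2,1)).2 : ℤ) : ZMod 625) = (pstepZ^[n] (2,1)).2 :=
      congrArg Prod.snd ih
    rw [Function.iterate_succ_apply', Function.iterate_succ_apply']
    simp only [pstep, pstepZ]
    push_cast
    rw [h1, h2]

lemma pgrowth : ∀ k : ℕ, 0 < (pstep^[k] (2,1)).1 ∧ 0 < (pstep^[k] (2,1)).2 ∧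
    (pstep^[k] (2,1)).1 ^ 2 - 5 * (pstep^[k] (2,1)).2 ^ 2 = -1 ∧
    2 * 16 ^ k ≤ (pstep^[k] (2,1)).1 := by
  intro k
  induction k with
  | zero => norm_num [pstep]
  | succ n ih =>
    obtain ⟨ha, hb, h, hg⟩ := ih
    set a := (pstep^[n] (2,1)).1 with hadef
    set b := (pstep^[n] (2,1)).2 with hbdef
    rw [Function.iterate_succ_apply']
    simp only [pstep, ← hadef, ← hbdef]
    have h7 : 7 * a < 20 * b := by nlinarith
    refine ⟨by linarith, by linarith, by linear_combination h, ?_⟩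
    have : (2:ℤ) * 16 ^ (n+1) = 16 * (2 * 16 ^ n) := by ring
    rw [this]
    linarith

lemma pclassify : ∀ (n : ℕ) (u y : ℤ), y ≤ n → 0 < u → 0 < y →
    u ^ 2 - 5 * y ^ 2 = -1 → ∃ k, pstep^[k] (2, 1) = (u, y) := by
  intro n
  induction n with
  | zero => intro u y hyn hu hy _; exfalso; exact absurd hyn (by push_cast; linarith)
  | succ n ih =>
    intro u y hyn hu hy h
    rcases eq_or_lt_of_le (show (1:ℤ) ≤ y from hy) with h1 | h1
    · have hu2 : (u - 2) * (u + 2) = 0 := by linear_combination h - 5 * (y+1) * h1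
      rcases mul_eq_zero.mp hu2 with h2 | h2
      · exact ⟨0, by simp [← h1]; omega⟩
      · exfalso; linarith
    · set u' := 9*u - 20*y with hu'def
      set y' := 9*y - 4*u with hy'def
      have h' : u' ^ 2 - 5 * y' ^ 2 = -1 := by rw [hu'def, hy'def]; linear_combination h
      have hy' : 0 < y' := by nlinarith
      have hu' : 0 < u' := by
        by_contra hc
        push_neg at hc
        have hsq : u' ^ 2 ≥ 4 := by nlinarith
        have h2 : u' ≤ -2 := by nlinarith
        nlinarith
      have hlt : y' < y := by nlinarith
      obtain ⟨k, hk⟩ := ih u' y' (by push_cast at hyn ⊢; omega) hu' hy' h'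
      refine ⟨k + 1, ?_⟩
      rw [Function.iterate_succ_apply', hk]
      simp only [pstep, hu'def, hy'def]
      simp only [Prod.mk.injEq]
      constructor <;> ring

set_option maxRecDepth 100000 in
lemma pmod : ∀ k < 312, (pstepZ^[k] (2,1)).2 ≠ 0 := by decide

/-- If `(u, v)` is the positive integer solution of `u² - 5⁹·v² = -1` with `u` minimal,
then `u² + 1 > 2^2048`. -/
theorem pell_five_ninth_minimal_solution_large (u v : ℤ) (hu : 0 < u) (hv : 0 < v)
    (h : u ^ 2 - 5 ^ 9 * v ^ 2 = -1)
    (hmin : ∀ u' v' : ℤ, 0 < u' → 0 < v' → u' ^ 2 - 5 ^ 9 * v' ^ 2 = -1 → u ≤ u') :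
    (2 : ℤ) ^ 2048 < u ^ 2 + 1 := by
  set y : ℤ := 625 * v with hydef
  have h2 : u ^ 2 - 5 * y ^ 2 = -1 := by rw [hydef]; linear_combination h
  have hy : 0 < y := by positivity
  obtain ⟨k, hk⟩ := pclassify y.toNat u y (Int.self_le_toNat y) hu hy h2
  -- 625 ∣ y, so mod component is 0
  have hcast := pstep_cast k
  rw [hk] at hcast
  have hz : (pstepZ^[k] (2,1)).2 = 0 := by
    have := congrArg Prod.snd hcast
    simp only at this
    rw [← this, hydef]
    rw [ZMod.intCast_zmod_eq_zero_iff_dvd]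
    exact Dvd.intro v rfl
  have hk312 : 312 ≤ k := by
    by_contra hc
    push_neg at hc
    exact pmod k hc hz
  obtain ⟨_, _, _, hg⟩ := pgrowth k
  rw [hk] at hg
  have hgu : (2:ℤ) ^ 1249 ≤ u := by
    calc (2:ℤ) ^ 1249 = 2 * 16 ^ 312 := by rw [show (16:ℤ) = 2^4 by norm_num, ← pow_mul, ← pow_succ']
    _ ≤ 2 * 16 ^ k := by
        have : (16:ℤ)^312 ≤ 16^k := pow_le_pow_right₀ (by norm_num) hk312
        linarith
    _ ≤ u := hg
  have hu2 : (2:ℤ) ^ 2498 ≤ u ^ 2 := by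
    calc (2:ℤ) ^ 2498 = (2 ^ 1249) ^ 2 := by rw [← pow_mul]
    _ ≤ u ^ 2 := by
        apply pow_le_pow_left₀ (by positivity) hgu
  have : (2:ℤ) ^ 2048 < 2 ^ 2498 := by
    apply pow_lt_pow_right₀ (by norm_num) (by norm_num)
  exact (this.trans_le hu2).trans (lt_add_one _)
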